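/- The prior p(x₁,x₂) = x₁x₂/(x₁+x₂)² on D = {x₁ > 0, x₂ > 0} satisfies all three boundary divergence conditions: ∫_0^1 p(x₁,x₂)^{-1} dx₁ = ∞ for every x₂ > 0, ∫_0^1 p(x₁,x₂)^{-1} dx₂ = ∞ for every x₁ > 0, and ∫_1^∞ (r · p(rs₁, rs₂))^{-1} dr = ∞ for every unit vector (s₁,s₂) with s₁, s₂ > 0. -/

import Mathlib

open Real MeasureTheory

lemma not_int_inv_Ioo : ¬ IntegrableOn (fun x : ℝ => x⁻¹) (Set.Ioo (0 : ℝ) 1) := by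
  intro h
  have h' : IntegrableOn (fun x : ℝ => x ^ (-1 : ℝ)) (Set.Ioo (0 : ℝ) 1) := by
    apply h.congr_fun ?_ measurableSet_Ioo
    intro x hx
    simp [Real.rpow_neg_one]
  rw [intervalIntegral.integrableOn_Ioo_rpow_iff zero_lt_one] at h'
  linarith

lemma not_int_inv_Ioi : ¬ IntegrableOn (fun x : ℝ => x⁻¹) (Set.Ioi (1 : ℝ)) := by
  intro h
  have h' : IntegrableOn (fun x : ℝ => x ^ (-1 : ℝ)) (Set.Ioi (1 : ℝ)) := by
    apply h.congr_fun ?_ measurableSet_Ioi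
    intro x hx
    simp [Real.rpow_neg_one]
  rw [integrableOn_Ioi_rpow_iff zero_lt_one] at h'
  linarith

lemma aux_half (p : ℝ → ℝ → ℝ) (hp : ∀ x₁ x₂, p x₁ x₂ = x₁ * x₂ / (x₁ + x₂) ^ 2)
    (x₂ : ℝ) (hx₂ : 0 < x₂) :
    ¬ IntegrableOn (fun x₁ => (p x₁ x₂)⁻¹) (Set.Ioo (0 : ℝ) 1) := by
  intro h
  have hg : IntegrableOn (fun x : ℝ => x₂ * x⁻¹) (Set.Ioo (0 : ℝ) 1) := by
    apply Integrable.mono' h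
    · exact (measurable_const.mul measurable_inv).aestronglyMeasurable
    · filter_upwards [ae_restrict_mem measurableSet_Ioo] with x hx
      obtain ⟨hx0, hx1⟩ := hx
      rw [Real.norm_eq_abs, abs_of_pos (by positivity), hp, inv_div,
        le_div_iff₀ (by positivity)]
      have e : x₂ * x⁻¹ * (x * x₂) = x₂ ^ 2 := by field_simp
      rw [e]
      nlinarith
  have h2 : IntegrableOn (fun x : ℝ => x₂⁻¹ * (x₂ * x⁻¹)) (Set.Ioo (0 : ℝ) 1) :=
    hg.const_mul x₂⁻¹
  apply not_int_inv_Ioo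
  apply h2.congr_fun ?_ measurableSet_Ioo
  intro x hx
  field_simp

theorem stmt12 (p : ℝ → ℝ → ℝ) (hp : ∀ x₁ x₂, p x₁ x₂ = x₁ * x₂ / (x₁ + x₂) ^ 2) :
    (∀ x₂ : ℝ, 0 < x₂ →
        ¬ IntegrableOn (fun x₁ => (p x₁ x₂)⁻¹) (Set.Ioo (0 : ℝ) 1)) ∧
    (∀ x₁ : ℝ, 0 < x₁ →
        ¬ IntegrableOn (fun x₂ => (p x₁ x₂)⁻¹) (Set.Ioo (0 : ℝ) 1)) ∧
    (∀ s₁ s₂ : ℝ, 0 < s₁ → 0 < s₂ → s₁ ^ 2 + s₂ ^ 2 = 1 →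
        ¬ IntegrableOn (fun r => (r * p (r * s₁) (r * s₂))⁻¹) (Set.Ioi (1 : ℝ))) := by
  refine ⟨fun x₂ hx₂ => aux_half p hp x₂ hx₂, fun x₁ hx₁ => ?_, fun s₁ s₂ hs₁ hs₂ _ => ?_⟩
  · exact aux_half (fun a b => p b a) (fun a b => by rw [hp]; ring) x₁ hx₁
  · intro h
    set c : ℝ := s₁ * s₂ / (s₁ + s₂) ^ 2 with hc
    have hcpos : 0 < c := by positivity
    have hg : IntegrableOn (fun r : ℝ => c⁻¹ * r⁻¹) (Set.Ioi (1 : ℝ)) := by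
      apply h.congr_fun ?_ measurableSet_Ioi
      intro r hr
      have hr0 : (0:ℝ) < r := lt_trans zero_lt_one hr
      show (r * p (r * s₁) (r * s₂))⁻¹ = c⁻¹ * r⁻¹
      rw [hp]
      have : r * s₁ * (r * s₂) / (r * s₁ + r * s₂) ^ 2 = c := by
        rw [hc]; field_simp
      rw [this, mul_inv, mul_comm]
    have h2 : IntegrableOn (fun r : ℝ => c * (c⁻¹ * r⁻¹)) (Set.Ioi (1 : ℝ)) :=
      hg.const_mul c
    apply not_int_inv_Ioi
    apply h2.congr_fun ?_ measurableSet_Ioi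
    intro x hx
    show c * (c⁻¹ * x⁻¹) = x⁻¹
    rw [← mul_assoc, mul_inv_cancel₀ hcpos.ne', one_mul]
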